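/- Let D be a simple pMC over a finite parameter set X with target set T, and let val, val' : X → [0,1] be well-defined valuations such that for every x ∈ X: (val x = 0 ↔ val' x = 0) and (val x = 1 ↔ val' x = 1). Then for every state s: Pr_{D[val],s}(◇T) = 0 if and only if Pr_{D[val'],s}(◇T) = 0, and Pr_{D[val],s}(◇T) = 1 if and only if Pr_{D[val'],s}(◇T) = 1. -/

import Mathlib

/-- A finite path in state space `S`: a length `m` together with `m + 1` states. -/
abbrev MCPath (S : Type) : Type := Σ m : ℕ, Fin (m + 1) → S

/-- The mass of a path: the product of the transition probabilities along it. -/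
def pathMass {S : Type} (P : S → S → ℝ) (π : MCPath S) : ℝ :=
  ∏ i : Fin π.1, P (π.2 i.castSucc) (π.2 i.succ)

/-- A hitting path from `s` to `T`: it starts in `s`, ends in `T`, and no proper prefix
visits `T`. -/
def IsHitting {S : Type} (T : Set S) (s : S) (π : MCPath S) : Prop :=
  π.2 0 = s ∧ π.2 (Fin.last π.1) ∈ T ∧ ∀ i : Fin π.1, π.2 i.castSucc ∉ T

/-- The reachability probability `Pr_{P,s}(◇T)`: the sum of the masses of all hitting
paths from `s` to `T`. -/
noncomputable def reachProb {S : Type} (P : S → S → ℝ) (T : Set S) (s : S) : ℝ :=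
  ∑' π : {π : MCPath S // IsHitting T s π}, pathMass P π.1

/-- An entry of a simple pMC: a nonnegative rational constant, a variable `x`, or `1 - x`. -/
def SimpleEntry {X : Type} (p : MvPolynomial X ℚ) : Prop :=
  (∃ q : ℚ, 0 ≤ q ∧ p = MvPolynomial.C q) ∨
  (∃ x : X, p = MvPolynomial.X x) ∨
  (∃ x : X, p = 1 - MvPolynomial.X x)

/-- A simple parametric Markov chain over parameter set `X` with `n` states:
all transition polynomials are simple entries and every row sums to `1` as a polynomial. -/
structure SimplePMC (X : Type) (n : ℕ) where
  init : Fin n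
  P : Fin n → Fin n → MvPolynomial X ℚ
  simple : ∀ s s', SimpleEntry (P s s')
  rowSum : ∀ s, ∑ s', P s s' = 1

/-- A valuation is well-defined if every parameter value lies in `[0,1]`. -/
def WDVal {X : Type} (val : X → ℝ) : Prop := ∀ x, val x ∈ Set.Icc (0 : ℝ) 1

/-- A valuation is graph-preserving if every parameter value lies in `(0,1)`. -/
def GPVal {X : Type} (val : X → ℝ) : Prop := ∀ x, val x ∈ Set.Ioo (0 : ℝ) 1

/-- The transition matrix of the instantiation `D[val]`. -/
noncomputable def instP {X : Type} {n : ℕ} (D : SimplePMC X n) (val : X → ℝ) :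
    Fin n → Fin n → ℝ :=
  fun s s' => MvPolynomial.aeval val (D.P s s')

section Aux
variable {S : Type} [Fintype S]

open Classical in
noncomputable def hseq (P : S → S → ℝ) (T : Set S) : ℕ → S → ℝ
  | 0 => fun s => if s ∈ T then 1 else 0
  | m+1 => fun s => if s ∈ T then 1 else ∑ s', P s s' * hseq P T m s'

variable {P : S → S → ℝ} {T : Set S}

open Classical

lemma hseq_of_mem {s : S} (hs : s ∈ T) : ∀ m, hseq P T m s = 1
  | 0 => if_pos hs
  | _+1 => if_pos hs

lemma hseq_zero_of_not_mem {s : S} (hs : s ∉ T) : hseq P T 0 s = 0 := if_neg hs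

lemma hseq_succ_of_not_mem {s : S} (hs : s ∉ T) (m : ℕ) :
    hseq P T (m+1) s = ∑ s', P s s' * hseq P T m s' := if_neg hs

variable (hP : ∀ s s', 0 ≤ P s s') (hrow : ∀ s, ∑ s', P s s' = 1)
include hP

lemma hseq_nonneg : ∀ m s, 0 ≤ hseq P T m s
  | 0, s => by by_cases hs : s ∈ T <;> simp [hseq, hs]
  | m+1, s => by
    by_cases hs : s ∈ T
    · simp [hseq, hs]
    · rw [hseq_succ_of_not_mem hs]
      exact Finset.sum_nonneg fun s' _ => mul_nonneg (hP s s') (hseq_nonneg m s')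

include hrow in
lemma hseq_le_one : ∀ m s, hseq P T m s ≤ 1
  | 0, s => by by_cases hs : s ∈ T <;> simp [hseq, hs]
  | m+1, s => by
    by_cases hs : s ∈ T
    · simp [hseq, hs]
    · rw [hseq_succ_of_not_mem hs]
      calc ∑ s', P s s' * hseq P T m s' ≤ ∑ s', P s s' * 1 :=
            Finset.sum_le_sum fun s' _ =>
              mul_le_mul_of_nonneg_left (hseq_le_one m s') (hP s s')
        _ = 1 := by simpa using hrow s

lemma hseq_mono (m : ℕ) (s : S) : hseq P T m s ≤ hseq P T (m+1) s := by
  induction m generalizing s with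
  | zero =>
    by_cases hs : s ∈ T
    · simp [hseq_of_mem hs]
    · rw [hseq_zero_of_not_mem hs, hseq_succ_of_not_mem hs]
      exact Finset.sum_nonneg fun s' _ => mul_nonneg (hP s s') (hseq_nonneg hP 0 s')
  | succ m ih =>
    by_cases hs : s ∈ T
    · simp [hseq_of_mem hs]
    · rw [hseq_succ_of_not_mem hs, hseq_succ_of_not_mem hs]
      exact Finset.sum_le_sum fun s' _ => mul_le_mul_of_nonneg_left (ih s') (hP s s')

lemma hseq_mono' {m m' : ℕ} (h : m ≤ m') (s : S) : hseq P T m s ≤ hseq P T m' s := by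
  induction h with
  | refl => exact le_refl _
  | step h ih => exact le_trans ih (hseq_mono hP _ _)

end Aux

section Paths
variable {S : Type}

def consPath (s : S) (π : MCPath S) : MCPath S := ⟨π.1 + 1, Fin.cons s π.2⟩

def tailPath : MCPath S → MCPath S
  | ⟨0, f⟩ => ⟨0, f⟩
  | ⟨k+1, f⟩ => ⟨k, fun j => f j.succ⟩

lemma tailPath_len {π : MCPath S} (h : π.1 ≠ 0) : (tailPath π).1 + 1 = π.1 := by
  obtain ⟨k, f⟩ := π
  cases k with
  | zero => exact absurd rfl h
  | succ k => rfl

lemma consPath_tailPath {π : MCPath S} {s : S} (h : π.1 ≠ 0) (h0 : π.2 0 = s) :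
    consPath s (tailPath π) = π := by
  obtain ⟨k, f⟩ := π
  cases k with
  | zero => exact absurd rfl h
  | succ k =>
    show (⟨k+1, Fin.cons s fun j => f j.succ⟩ : MCPath S) = ⟨k+1, f⟩
    congr 1
    funext i
    induction i using Fin.cases with
    | zero => simpa using h0.symm
    | succ j => simp

lemma tailPath_consPath (s : S) (π : MCPath S) : tailPath (consPath s π) = π := by
  obtain ⟨k, f⟩ := π
  show (⟨k, fun j => (Fin.cons s f : Fin (k+1+1) → S) j.succ⟩ : MCPath S) = ⟨k, f⟩
  congr 1

lemma pathMass_consPath (P : S → S → ℝ) (s : S) (π : MCPath S) :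
    pathMass P (consPath s π) = P s (π.2 0) * pathMass P π := by
  show (∏ i : Fin (π.1 + 1), P ((Fin.cons s π.2 : Fin (π.1+1+1) → S) i.castSucc)
      ((Fin.cons s π.2 : Fin (π.1+1+1) → S) i.succ)) = _
  rw [Fin.prod_univ_succ]
  simp only [Fin.castSucc_zero, Fin.cons_zero, Fin.cons_succ, ← Fin.succ_castSucc]
  rfl

lemma isHitting_consPath {T : Set S} {s s' : S} {π : MCPath S}
    (hs : s ∉ T) (hπ : IsHitting T s' π) : IsHitting T s (consPath s π) := by
  obtain ⟨h0, hlast, havoid⟩ := hπ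
  refine ⟨rfl, ?_, ?_⟩
  · show (Fin.cons s π.2 : Fin (π.1+1+1) → S) (Fin.last (π.1+1)) ∈ T
    rw [← Fin.succ_last]
    simpa using hlast
  · intro i
    induction i using Fin.cases with
    | zero => simpa [consPath] using hs
    | succ j =>
      show (Fin.cons s π.2 : Fin (π.1+1+1) → S) j.succ.castSucc ∉ T
      rw [← Fin.succ_castSucc]
      simpa using havoid j

lemma isHitting_len_zero {T : Set S} {s : S} {π : MCPath S}
    (hπ : IsHitting T s π) (hs : s ∈ T) : π = ⟨0, fun _ => s⟩ := by
  obtain ⟨h0, hlast, havoid⟩ := hπ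
  obtain ⟨k, f⟩ := π
  cases k with
  | zero =>
    congr 1
    funext i
    have : i = 0 := by omega
    rw [this]; exact h0
  | succ k =>
    exact absurd (h0 ▸ hs) (havoid 0)

lemma isHitting_len_ne_zero {T : Set S} {s : S} {π : MCPath S}
    (hπ : IsHitting T s π) (hs : s ∉ T) : π.1 ≠ 0 := by
  intro h
  obtain ⟨h0, hlast, havoid⟩ := hπ
  obtain ⟨k, f⟩ := π
  simp only at h
  subst h
  exact hs (h0 ▸ hlast)

lemma isHitting_tailPath {T : Set S} {s : S} {π : MCPath S}
    (hπ : IsHitting T s π) (hs : s ∉ T) :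
    IsHitting T ((tailPath π).2 0) (tailPath π) := by
  obtain ⟨k, f⟩ := π
  cases k with
  | zero => exact absurd rfl (isHitting_len_ne_zero hπ hs)
  | succ k =>
    obtain ⟨h0, hlast, havoid⟩ := hπ
    refine ⟨rfl, ?_, ?_⟩
    · show f (Fin.last k).succ ∈ T
      rw [Fin.succ_last]
      exact hlast
    · intro j
      show f j.castSucc.succ ∉ T
      rw [Fin.succ_castSucc]
      exact havoid j.succ

lemma trivialPath_isHitting {T : Set S} {s : S} (hs : s ∈ T) :
    IsHitting T s (⟨0, fun _ => s⟩ : MCPath S) :=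
  ⟨rfl, hs, fun i => i.elim0⟩

end Paths

section Bound
variable {S : Type} [Fintype S] {P : S → S → ℝ} {T : Set S}
variable (hP : ∀ s s', 0 ≤ P s s') (hrow : ∀ s, ∑ s', P s s' = 1)

include hP in
lemma pathMass_nonneg (π : MCPath S) : 0 ≤ pathMass P π :=
  Finset.prod_nonneg fun _ _ => hP _ _

include hP hrow in
open Classical in
lemma sum_mass_le_hseq :
    ∀ (m : ℕ) (s : S) (F : Finset (MCPath S)),
      (∀ π ∈ F, IsHitting T s π ∧ π.1 ≤ m) → (∑ π ∈ F, pathMass P π) ≤ hseq P T m s := by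
  intro m
  induction m with
  | zero =>
    intro s F hF
    by_cases hs : s ∈ T
    · rw [hseq_of_mem hs]
      calc ∑ π ∈ F, pathMass P π
          ≤ ∑ π ∈ {(⟨0, fun _ => s⟩ : MCPath S)}, pathMass P π :=
            Finset.sum_le_sum_of_subset_of_nonneg
              (fun π hπ => by simp [isHitting_len_zero (hF π hπ).1 hs])
              (fun π _ _ => pathMass_nonneg hP π)
        _ = 1 := by simp [pathMass]
    · rw [hseq_zero_of_not_mem hs]
      have hFe : F = ∅ := Finset.eq_empty_of_forall_notMem fun π hπ =>
        (isHitting_len_ne_zero (hF π hπ).1 hs) (Nat.le_zero.mp (hF π hπ).2)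
      simp [hFe]
  | succ m ih =>
    intro s F hF
    by_cases hs : s ∈ T
    · rw [hseq_of_mem hs]
      calc ∑ π ∈ F, pathMass P π
          ≤ ∑ π ∈ {(⟨0, fun _ => s⟩ : MCPath S)}, pathMass P π :=
            Finset.sum_le_sum_of_subset_of_nonneg
              (fun π hπ => by simp [isHitting_len_zero (hF π hπ).1 hs])
              (fun π _ _ => pathMass_nonneg hP π)
        _ = 1 := by simp [pathMass]
    · rw [hseq_succ_of_not_mem hs]
      rw [← Finset.sum_fiberwise_of_maps_to
        (g := fun π : MCPath S => (tailPath π).2 0)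
        (fun π _ => Finset.mem_univ _) (pathMass P)]
      apply Finset.sum_le_sum
      intro s' _
      have key : ∀ π ∈ F.filter (fun π => (tailPath π).2 0 = s'),
          pathMass P π = P s s' * pathMass P (tailPath π) := by
        intro π hπ
        rw [Finset.mem_filter] at hπ
        obtain ⟨hπF, hhead⟩ := hπ
        have h1 := (hF π hπF).1
        have hne := isHitting_len_ne_zero h1 hs
        conv_lhs => rw [← consPath_tailPath hne h1.1]
        rw [pathMass_consPath, hhead]
      rw [Finset.sum_congr rfl key, ← Finset.mul_sum]
      apply mul_le_mul_of_nonneg_left _ (hP s s')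
      have hinj : ∀ x ∈ F.filter (fun π => (tailPath π).2 0 = s'),
          ∀ y ∈ F.filter (fun π => (tailPath π).2 0 = s'),
          tailPath x = tailPath y → x = y := by
        intro x hx y hy hxy
        rw [Finset.mem_filter] at hx hy
        have h1 := (hF x hx.1).1
        have h2 := (hF y hy.1).1
        rw [← consPath_tailPath (isHitting_len_ne_zero h1 hs) h1.1,
          ← consPath_tailPath (isHitting_len_ne_zero h2 hs) h2.1, hxy]
      rw [← Finset.sum_image hinj]
      apply ih s'
      intro ρ hρ
      rw [Finset.mem_image] at hρ
      obtain ⟨π, hπ, rfl⟩ := hρ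
      rw [Finset.mem_filter] at hπ
      have h1 := (hF π hπ.1).1
      have hne := isHitting_len_ne_zero h1 hs
      constructor
      · have := isHitting_tailPath h1 hs
        rwa [hπ.2] at this
      · have hlen := tailPath_len (π := π) hne
        have := (hF π hπ.1).2
        omega

include hP hrow in
lemma summable_hitting (s : S) :
    Summable (fun π : {π : MCPath S // IsHitting T s π} => pathMass P π.1) := by
  apply summable_of_sum_le (c := 1)
  · intro π
    exact pathMass_nonneg hP π.1
  · intro u
    classical
    have himg : ∑ π ∈ u, pathMass P π.1 = ∑ ρ ∈ u.image Subtype.val, pathMass P ρ := by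
      rw [Finset.sum_image (fun x _ y _ h => Subtype.ext h)]
    rw [himg]
    set m := (u.image Subtype.val).sup (fun ρ => ρ.1) with hm
    calc ∑ ρ ∈ u.image Subtype.val, pathMass P ρ ≤ hseq P T m s := by
          apply sum_mass_le_hseq hP hrow
          intro π hπ
          refine ⟨?_, Finset.le_sup hπ⟩
          rw [Finset.mem_image] at hπ
          obtain ⟨π', _, rfl⟩ := hπ
          exact π'.2
      _ ≤ 1 := hseq_le_one hP hrow m s

end Bound
section Fix
variable {S : Type} [Fintype S] {P : S → S → ℝ} {T : Set S}
variable (hP : ∀ s s', 0 ≤ P s s') (hrow : ∀ s, ∑ s', P s s' = 1)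

lemma sigma_subtype_ext {α β : Type} {Q : α → β → Prop}
    {x y : Σ a, {b // Q a b}} (h1 : x.1 = y.1) (h2 : x.2.1 = y.2.1) : x = y := by
  obtain ⟨a, b, hb⟩ := x
  obtain ⟨a', b', hb'⟩ := y
  simp only at h1 h2
  subst h1
  subst h2
  rfl

/-- The decomposition of hitting paths from a non-target state. -/
noncomputable def hittingEquiv (T : Set S) (s : S) (hs : s ∉ T) :
    (Σ s' : S, {π : MCPath S // IsHitting T s' π}) ≃ {π : MCPath S // IsHitting T s π} where
  toFun x := ⟨consPath s x.2.1, isHitting_consPath hs x.2.2⟩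
  invFun π := ⟨(tailPath π.1).2 0, tailPath π.1, isHitting_tailPath π.2 hs⟩
  left_inv := by
    rintro ⟨s', π, hπ⟩
    apply sigma_subtype_ext
    · show (tailPath (consPath s π)).2 0 = s'
      rw [tailPath_consPath]
      exact hπ.1
    · show tailPath (consPath s π) = π
      exact tailPath_consPath s π
  right_inv := by
    rintro ⟨π, hπ⟩
    apply Subtype.ext
    show consPath s (tailPath π) = π
    exact consPath_tailPath (isHitting_len_ne_zero hπ hs) hπ.1

include hP in
lemma reachProb_mem (s : S) (hs : s ∈ T) : reachProb P T s = 1 := by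
  have he : IsHitting T s (⟨0, fun _ => s⟩ : MCPath S) := trivialPath_isHitting hs
  have : reachProb P T s = pathMass P (⟨0, fun _ => s⟩ : MCPath S) := by
    apply tsum_eq_single (⟨⟨0, fun _ => s⟩, he⟩ : {π : MCPath S // IsHitting T s π})
    intro b hb
    exact absurd (Subtype.ext (isHitting_len_zero b.2 hs)) hb
  rw [this]
  simp [pathMass]

include hP hrow in
lemma reachProb_not_mem (s : S) (hs : s ∉ T) :
    reachProb P T s = ∑ s', P s s' * reachProb P T s' := by
  have hsum := summable_hitting hP hrow (T := T) s
  have he := hittingEquiv T s hs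
  have h1 : reachProb P T s
      = ∑' x : Σ s' : S, {π : MCPath S // IsHitting T s' π},
          pathMass P ((hittingEquiv T s hs) x).1 :=
    ((hittingEquiv T s hs).tsum_eq fun π : {π : MCPath S // IsHitting T s π} =>
      pathMass P π.1).symm
  have h2 : ∀ x : Σ s' : S, {π : MCPath S // IsHitting T s' π},
      pathMass P ((hittingEquiv T s hs) x).1 = P s x.1 * pathMass P x.2.1 := by
    rintro ⟨s', π, hπ⟩
    show pathMass P (consPath s π) = P s s' * pathMass P π
    rw [pathMass_consPath, hπ.1]
  rw [h1, tsum_congr h2]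
  have hsum2 : Summable (fun x : Σ s' : S, {π : MCPath S // IsHitting T s' π} =>
      P s x.1 * pathMass P x.2.1) := by
    have := ((hittingEquiv T s hs).summable_iff
      (f := fun π : {π : MCPath S // IsHitting T s π} => pathMass P π.1)).mpr hsum
    apply this.congr
    intro x
    show pathMass P ((hittingEquiv T s hs) x).1 = _
    exact h2 x
  rw [Summable.tsum_sigma hsum2]
  rw [tsum_fintype]
  apply Finset.sum_congr rfl
  intro s' _
  exact (tsum_mul_left : ∑' (c : {π : MCPath S // IsHitting T s' π}), P s s' * pathMass P c.1 = _)

include hP hrow in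
lemma reachProb_nonneg (s : S) : 0 ≤ reachProb P T s :=
  tsum_nonneg fun π => pathMass_nonneg hP π.1

include hP hrow in
lemma hseq_le_reachProb (m : ℕ) (s : S) : hseq P T m s ≤ reachProb P T s := by
  induction m generalizing s with
  | zero =>
    by_cases hs : s ∈ T
    · rw [hseq_of_mem hs, reachProb_mem hP s hs]
    · rw [hseq_zero_of_not_mem hs]
      exact reachProb_nonneg hP hrow s
  | succ m ih =>
    by_cases hs : s ∈ T
    · rw [hseq_of_mem hs, reachProb_mem hP s hs]
    · rw [hseq_succ_of_not_mem hs, reachProb_not_mem hP hrow s hs]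
      exact Finset.sum_le_sum fun s' _ => mul_le_mul_of_nonneg_left (ih s') (hP s s')

include hP hrow in
lemma reachProb_eq_iSup (s : S) : reachProb P T s = ⨆ m, hseq P T m s := by
  classical
  have hbdd : BddAbove (Set.range fun m => hseq P T m s) := by
    refine ⟨1, ?_⟩
    rintro x ⟨m, rfl⟩
    exact hseq_le_one hP hrow m s
  apply le_antisymm
  · apply Summable.tsum_le_of_sum_le (summable_hitting hP hrow s)
    intro u
    have himg : ∑ π ∈ u, pathMass P π.1 = ∑ ρ ∈ u.image Subtype.val, pathMass P ρ := by
      rw [Finset.sum_image (fun x _ y _ h => Subtype.ext h)]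
    rw [himg]
    set m := (u.image Subtype.val).sup (fun ρ => ρ.1) with hm
    calc ∑ ρ ∈ u.image Subtype.val, pathMass P ρ ≤ hseq P T m s := by
          apply sum_mass_le_hseq hP hrow
          intro π hπ
          refine ⟨?_, Finset.le_sup hπ⟩
          rw [Finset.mem_image] at hπ
          obtain ⟨π', _, rfl⟩ := hπ
          exact π'.2
      _ ≤ ⨆ m, hseq P T m s := le_ciSup hbdd m
  · exact ciSup_le fun m => hseq_le_reachProb hP hrow m s

include hP hrow in
lemma reachProb_le_one (s : S) : reachProb P T s ≤ 1 := by
  rw [reachProb_eq_iSup hP hrow]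
  exact ciSup_le fun m => hseq_le_one hP hrow m s

end Fix
section Qual
variable {S : Type} [Fintype S] {T : Set S}

open Classical

lemma entry_le_one {P : S → S → ℝ} (hP : ∀ s s', 0 ≤ P s s')
    (hrow : ∀ s, ∑ s', P s s' = 1) (s s' : S) : P s s' ≤ 1 := by
  rw [← hrow s]
  exact Finset.single_le_sum (fun v _ => hP s v) (Finset.mem_univ s')

lemma hseq_eq_zero_iff {P Q : S → S → ℝ}
    (hP : ∀ s s', 0 ≤ P s s') (hQ : ∀ s s', 0 ≤ Q s s')
    (hzero : ∀ s s', P s s' = 0 ↔ Q s s' = 0) :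
    ∀ m s, (hseq P T m s = 0 ↔ hseq Q T m s = 0) := by
  intro m
  induction m with
  | zero =>
    intro s
    by_cases hs : s ∈ T
    · simp [hseq_of_mem hs]
    · simp [hseq_zero_of_not_mem hs]
  | succ m ih =>
    intro s
    by_cases hs : s ∈ T
    · simp [hseq_of_mem hs]
    · rw [hseq_succ_of_not_mem hs, hseq_succ_of_not_mem hs,
        Finset.sum_eq_zero_iff_of_nonneg
          (fun s' _ => mul_nonneg (hP s s') (hseq_nonneg hP m s')),
        Finset.sum_eq_zero_iff_of_nonneg
          (fun s' _ => mul_nonneg (hQ s s') (hseq_nonneg hQ m s'))]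
      constructor
      · intro h s' hs'
        rcases mul_eq_zero.mp (h s' hs') with h0 | h0
        · exact mul_eq_zero_of_left ((hzero s s').mp h0) _
        · exact mul_eq_zero_of_right _ ((ih s').mp h0)
      · intro h s' hs'
        rcases mul_eq_zero.mp (h s' hs') with h0 | h0
        · exact mul_eq_zero_of_left ((hzero s s').mpr h0) _
        · exact mul_eq_zero_of_right _ ((ih s').mpr h0)

variable {P : S → S → ℝ}
variable (hP : ∀ s s', 0 ≤ P s s') (hrow : ∀ s, ∑ s', P s s' = 1)

include hP hrow in
lemma reachProb_eq_zero_iff (s : S) :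
    reachProb P T s = 0 ↔ ∀ m, hseq P T m s = 0 := by
  rw [reachProb_eq_iSup hP hrow]
  have hbdd : BddAbove (Set.range fun m => hseq P T m s) := by
    refine ⟨1, ?_⟩
    rintro x ⟨m, rfl⟩
    exact hseq_le_one hP hrow m s
  constructor
  · intro h m
    refine le_antisymm ?_ (hseq_nonneg hP m s)
    rw [← h]
    exact le_ciSup hbdd m
  · intro h
    simp only [h]
    exact ciSup_const

include hP hrow in
lemma hseq_bounded_away {s u : S}
    (hreach : Relation.ReflTransGen (fun a b => a ∉ T ∧ P a b ≠ 0) s u)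
    (hu : ∀ m, hseq P T m u = 0) :
    ∃ c, 0 < c ∧ ∀ m, hseq P T m s ≤ 1 - c := by
  induction hreach using Relation.ReflTransGen.head_induction_on with
  | refl => exact ⟨1, one_pos, fun m => by rw [hu m]; norm_num⟩
  | @head a b hab _ ih =>
    obtain ⟨c0, hc0, hc⟩ := ih
    have hPab : 0 < P a b := lt_of_le_of_ne (hP a b) (Ne.symm hab.2)
    have hPab1 : P a b ≤ 1 := entry_le_one hP hrow a b
    have hc0le1 : c0 ≤ 1 := by
      have h1 := hc 0
      have h2 : (0:ℝ) ≤ hseq P T 0 b := hseq_nonneg hP 0 b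
      linarith
    refine ⟨P a b * c0, mul_pos hPab hc0, ?_⟩
    intro m
    cases m with
    | zero =>
      rw [hseq_zero_of_not_mem hab.1]
      nlinarith
    | succ m =>
      rw [hseq_succ_of_not_mem hab.1]
      calc ∑ v, P a v * hseq P T m v
          ≤ ∑ v, (P a v - if v = b then P a b * c0 else 0) := by
            apply Finset.sum_le_sum
            intro v _
            by_cases hv : v = b
            · subst hv
              rw [if_pos rfl]
              have h3 : P a v * hseq P T m v ≤ P a v * (1 - c0) :=
                mul_le_mul_of_nonneg_left (hc m) (le_of_lt hPab)
              have h4 : P a v * (1 - c0) = P a v - P a v * c0 := by ring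
              linarith
            · rw [if_neg hv, sub_zero]
              have h3 : P a v * hseq P T m v ≤ P a v * 1 :=
                mul_le_mul_of_nonneg_left (hseq_le_one hP hrow m v) (hP a v)
              linarith
        _ = 1 - P a b * c0 := by
            rw [Finset.sum_sub_distrib, hrow a, Finset.sum_ite_eq' Finset.univ b
              (fun _ => P a b * c0)]
            simp

include hP hrow in
lemma iSup_hseq_eq_one {s : S}
    (h : ∀ u, Relation.ReflTransGen (fun a b => a ∉ T ∧ P a b ≠ 0) s u →
      ∃ m, hseq P T m u ≠ 0) :
    (⨆ m, hseq P T m s) = 1 := by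
  classical
  set R : Finset S := Finset.univ.filter
    (fun u => Relation.ReflTransGen (fun a b => a ∉ T ∧ P a b ≠ 0) s u) with hR
  have hmemR : ∀ u, u ∈ R ↔
      Relation.ReflTransGen (fun a b => a ∉ T ∧ P a b ≠ 0) s u := by
    intro u
    simp [hR]
  have hsR : s ∈ R := (hmemR s).mpr Relation.ReflTransGen.refl
  have hRne : R.Nonempty := ⟨s, hsR⟩
  -- closure of R
  have hRclosed : ∀ u ∈ R, ∀ v, u ∉ T → P u v ≠ 0 → v ∈ R := by
    intro u hu v hT hv
    exact (hmemR v).mpr (((hmemR u).mp hu).tail ⟨hT, hv⟩)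
  -- choose a uniform horizon N
  have hex : ∀ u : S, ∃ m, u ∈ R → 0 < hseq P T m u := by
    intro u
    by_cases hu : u ∈ R
    · obtain ⟨m, hm⟩ := h u ((hmemR u).mp hu)
      exact ⟨m, fun _ => lt_of_le_of_ne (hseq_nonneg hP m u) (Ne.symm hm)⟩
    · exact ⟨0, fun hc => absurd hc hu⟩
  choose g hg using hex
  set N := Finset.univ.sup g with hN
  have hposN : ∀ u ∈ R, 0 < hseq P T N u := by
    intro u hu
    exact lt_of_lt_of_le (hg u hu) (hseq_mono' hP (Finset.le_sup (f := g) (Finset.mem_univ u)) u)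
  set δ := R.inf' hRne (fun u => hseq P T N u) with hδ
  have hδpos : 0 < δ := (Finset.lt_inf'_iff hRne).mpr hposN
  have hδle1 : δ ≤ 1 :=
    le_trans (Finset.inf'_le _ hsR) (hseq_le_one hP hrow N s)
  set G : ℕ → ℝ := fun m => R.sup' hRne (fun u => 1 - hseq P T m u) with hG
  have hGle : ∀ m, ∀ u ∈ R, 1 - hseq P T m u ≤ G m := by
    intro m u hu
    exact Finset.le_sup' (fun u => 1 - hseq P T m u) hu
  have hGnonneg : ∀ m, 0 ≤ G m := by
    intro m
    have h1 : hseq P T m s ≤ 1 := hseq_le_one hP hrow m s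
    have h2 := hGle m s hsR
    linarith
  have hGone : ∀ m, G m ≤ 1 := by
    intro m
    apply Finset.sup'_le
    intro u _
    have hnn : (0:ℝ) ≤ hseq P T m u := hseq_nonneg hP m u
    linarith
  -- key submultiplicativity
  have hkey : ∀ k m, ∀ u ∈ R, 1 - hseq P T (k + m) u ≤ (1 - hseq P T k u) * G m := by
    intro k
    induction k with
    | zero =>
      intro m u hu
      by_cases hT : u ∈ T
      · rw [hseq_of_mem hT, hseq_of_mem hT]
        simp
      · rw [hseq_zero_of_not_mem hT, Nat.zero_add]
        simpa using hGle m u hu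
    | succ k ih =>
      intro m u hu
      by_cases hT : u ∈ T
      · rw [hseq_of_mem hT, hseq_of_mem hT]
        simp
      · have harith : k + 1 + m = (k + m) + 1 := by omega
        rw [harith, hseq_succ_of_not_mem hT, hseq_succ_of_not_mem hT]
        rw [show (1 : ℝ) - ∑ v, P u v * hseq P T (k+m) v
            = ∑ v, P u v * (1 - hseq P T (k+m) v) by
          rw [Finset.sum_congr rfl (fun v _ => mul_one_sub (P u v) _),
            Finset.sum_sub_distrib, hrow u],
          show (1 : ℝ) - ∑ v, P u v * hseq P T k v
            = ∑ v, P u v * (1 - hseq P T k v) by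
          rw [Finset.sum_congr rfl (fun v _ => mul_one_sub (P u v) _),
            Finset.sum_sub_distrib, hrow u],
          Finset.sum_mul]
        apply Finset.sum_le_sum
        intro v _
        by_cases hv : P u v = 0
        · rw [hv]; simp
        · rw [mul_assoc]
          exact mul_le_mul_of_nonneg_left (ih m v (hRclosed u hu v hT hv)) (hP u v)
  have hGsub : ∀ k m, G (k + m) ≤ G k * G m := by
    intro k m
    apply Finset.sup'_le
    intro u hu
    calc 1 - hseq P T (k+m) u ≤ (1 - hseq P T k u) * G m := hkey k m u hu
      _ ≤ G k * G m := mul_le_mul_of_nonneg_right (hGle k u hu) (hGnonneg m)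
  have hGN : G N ≤ 1 - δ := by
    apply Finset.sup'_le
    intro u hu
    have : δ ≤ hseq P T N u := Finset.inf'_le _ hu
    linarith
  have hGj : ∀ j : ℕ, G (j * N) ≤ (1 - δ) ^ j := by
    intro j
    induction j with
    | zero => simpa using hGone 0
    | succ j ih =>
      have : (j + 1) * N = j * N + N := by ring
      rw [this, pow_succ]
      calc G (j * N + N) ≤ G (j * N) * G N := hGsub (j * N) N
        _ ≤ (1 - δ) ^ j * (1 - δ) :=
          mul_le_mul ih hGN (hGnonneg N) (pow_nonneg (by linarith) j)
  have hbdd : BddAbove (Set.range fun m => hseq P T m s) := by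
    refine ⟨1, ?_⟩
    rintro x ⟨m, rfl⟩
    exact hseq_le_one hP hrow m s
  apply le_antisymm
  · exact ciSup_le fun m => hseq_le_one hP hrow m s
  · have htends : Filter.Tendsto (fun j : ℕ => 1 - (1 - δ) ^ j) Filter.atTop (nhds 1) := by
      have h0 : Filter.Tendsto (fun j : ℕ => (1 - δ) ^ j) Filter.atTop (nhds 0) := by
        apply tendsto_pow_atTop_nhds_zero_of_lt_one <;> linarith
      simpa using (tendsto_const_nhds (x := (1:ℝ)) (f := Filter.atTop)).sub h0
    apply le_of_tendsto' htends
    intro j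
    have h1 : 1 - hseq P T (j * N) s ≤ (1 - δ) ^ j :=
      le_trans (hGle (j * N) s hsR) (hGj j)
    have h2 : hseq P T (j * N) s ≤ ⨆ m, hseq P T m s := le_ciSup hbdd (j * N)
    linarith

include hP hrow in
lemma reachProb_eq_one_iff (s : S) :
    reachProb P T s = 1 ↔
      ∀ u, Relation.ReflTransGen (fun a b => a ∉ T ∧ P a b ≠ 0) s u →
        ∃ m, hseq P T m u ≠ 0 := by
  constructor
  · intro h1
    by_contra hcon
    push_neg at hcon
    obtain ⟨u, hreach, hu⟩ := hcon
    obtain ⟨c, hc, hbound⟩ := hseq_bounded_away hP hrow hreach hu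
    have : reachProb P T s ≤ 1 - c := by
      rw [reachProb_eq_iSup hP hrow]
      exact ciSup_le fun m => hbound m
    linarith
  · intro h
    rw [reachProb_eq_iSup hP hrow]
    exact iSup_hseq_eq_one hP hrow h

end Qual


section Inst
variable {X : Type} [Fintype X] {n : ℕ}

lemma instP_nonneg (D : SimplePMC X n) (val : X → ℝ) (hval : WDVal val) :
    ∀ s s', 0 ≤ instP D val s s' := by
  intro s s'
  rcases D.simple s s' with ⟨q, hq, hp⟩ | ⟨x, hp⟩ | ⟨x, hp⟩ <;>
    simp only [instP, hp, map_sub, map_one, MvPolynomial.aeval_C, MvPolynomial.aeval_X]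
  · rw [show (algebraMap ℚ ℝ) q = (q : ℝ) from rfl]
    exact_mod_cast hq
  · exact (hval x).1
  · have := (hval x).2
    linarith

lemma instP_rowsum (D : SimplePMC X n) (val : X → ℝ) :
    ∀ s, ∑ s', instP D val s s' = 1 := by
  intro s
  have : ∑ s', instP D val s s'
      = MvPolynomial.aeval val (∑ s', D.P s s') := by
    rw [map_sum]
    rfl
  rw [this, D.rowSum s, map_one]

lemma instP_zero_iff (D : SimplePMC X n) (val val' : X → ℝ)
    (hcons : ∀ x, (val x = 0 ↔ val' x = 0) ∧ (val x = 1 ↔ val' x = 1)) :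
    ∀ s s', instP D val s s' = 0 ↔ instP D val' s s' = 0 := by
  intro s s'
  rcases D.simple s s' with ⟨q, hq, hp⟩ | ⟨x, hp⟩ | ⟨x, hp⟩ <;>
    simp only [instP, hp, map_sub, map_one, MvPolynomial.aeval_C, MvPolynomial.aeval_X]
  · exact (hcons x).1
  · rw [sub_eq_zero, sub_eq_zero, eq_comm, eq_comm (a := (1:ℝ)) (b := val' x)]
    exact (hcons x).2

end Inst

/-- Proposition 3 of the paper, specialized to simple pMCs: two well-defined valuations with
the same zero/one pattern on the parameters induce chains agreeing on qualitative
reachability: from every state, the reachability probability is `0` (resp. `1`) under one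
valuation iff it is under the other. -/
theorem qualitative_reach_graph_consistent {X : Type} [Fintype X] {n : ℕ}
    (D : SimplePMC X n) (T : Set (Fin n)) (val val' : X → ℝ)
    (hval : WDVal val) (hval' : WDVal val')
    (hcons : ∀ x, (val x = 0 ↔ val' x = 0) ∧ (val x = 1 ↔ val' x = 1)) :
    ∀ s : Fin n,
      (reachProb (instP D val) T s = 0 ↔ reachProb (instP D val') T s = 0) ∧
      (reachProb (instP D val) T s = 1 ↔ reachProb (instP D val') T s = 1) := by
  intro s
  have hP1 := instP_nonneg D val hval
  have hP2 := instP_nonneg D val' hval'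
  have hrow1 := instP_rowsum D val
  have hrow2 := instP_rowsum D val'
  have hzero := instP_zero_iff D val val' hcons
  have hedge : ∀ a b : Fin n,
      (a ∉ T ∧ instP D val a b ≠ 0) → (a ∉ T ∧ instP D val' a b ≠ 0) :=
    fun a b h => ⟨h.1, fun h0 => h.2 ((hzero a b).mpr h0)⟩
  have hedge' : ∀ a b : Fin n,
      (a ∉ T ∧ instP D val' a b ≠ 0) → (a ∉ T ∧ instP D val a b ≠ 0) :=
    fun a b h => ⟨h.1, fun h0 => h.2 ((hzero a b).mp h0)⟩
  constructor
  · rw [reachProb_eq_zero_iff hP1 hrow1 s, reachProb_eq_zero_iff hP2 hrow2 s]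
    exact forall_congr' fun m => hseq_eq_zero_iff hP1 hP2 hzero m s
  · rw [reachProb_eq_one_iff hP1 hrow1 s, reachProb_eq_one_iff hP2 hrow2 s]
    constructor
    · intro h u hreach
      obtain ⟨m, hm⟩ := h u (Relation.ReflTransGen.mono (fun a b h => hedge' a b h) _ _ hreach)
      exact ⟨m, fun h0 => hm ((hseq_eq_zero_iff hP1 hP2 hzero m u).mpr h0)⟩
    · intro h u hreach
      obtain ⟨m, hm⟩ := h u (Relation.ReflTransGen.mono (fun a b h => hedge a b h) _ _ hreach)
      exact ⟨m, fun h0 => hm ((hseq_eq_zero_iff hP1 hP2 hzero m u).mp h0)⟩
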